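/- Let π be a uniformly random permutation of {1,...,n} (n ≥ 4), S = ∑_{i=1}^{⌊n/2⌋} d(π(2i-1), π(2i)), and suppose the diameter Δ = max_{x,y} d(x,y) satisfies Δ ≤ δ·n·r for some δ > 0, where r = (1/n)·∑_x d(p*,x) for a 1-median p*. Then Var(S) ≤ C·(r̄²·n + δ·n²·r·r̄ + δ²·n·r²) for an absolute constant C (e.g., C = 10), where r̄ = (1/n²)·∑_{x,y} d(x,y). -/

import Mathlib

open Finset

/-- Sum over i = 1..⌊n/2⌋ of d(π(2i-1), π(2i)), with 0-indexed points. -/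
def matchingSum (n : ℕ) (d : Fin n → Fin n → ℝ) (π : Equiv.Perm (Fin n)) : ℝ :=
  ∑ i : Fin (n / 2),
    d (π ⟨2 * i.val, by have := i.isLt; omega⟩) (π ⟨2 * i.val + 1, by have := i.isLt; omega⟩)

/-- Expectation of `f` under a uniformly random permutation of `Fin n`. -/
noncomputable def permExp (n : ℕ) (f : Equiv.Perm (Fin n) → ℝ) : ℝ :=
  (∑ π : Equiv.Perm (Fin n), f π) / (Nat.factorial n : ℝ)

/-- Variance of `f` under a uniformly random permutation of `Fin n`. -/
noncomputable def permVar (n : ℕ) (f : Equiv.Perm (Fin n) → ℝ) : ℝ :=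
  permExp n (fun π => (f π) ^ 2) - (permExp n f) ^ 2


/-! ### Auxiliary lemmas -/

lemma exists_perm_comp {α β : Type*} [Fintype α] [Fintype β] [DecidableEq β]
    (g₁ g₂ : α ↪ β) : ∃ σ : Equiv.Perm β, ∀ a, σ (g₂ a) = g₁ a := by
  classical
  have hcard : Fintype.card (↥(Set.range ⇑g₂)ᶜ) = Fintype.card (↥(Set.range ⇑g₁)ᶜ) := by
    rw [Fintype.card_compl_set, Fintype.card_compl_set,
      Set.card_range_of_injective g₁.injective, Set.card_range_of_injective g₂.injective]
  let e_c : (↥(Set.range ⇑g₂)ᶜ) ≃ (↥(Set.range ⇑g₁)ᶜ) := Fintype.equivOfCardEq hcard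
  let e_r : ↥(Set.range ⇑g₂) ≃ ↥(Set.range ⇑g₁) :=
    (Equiv.ofInjective _ g₂.injective).symm.trans (Equiv.ofInjective _ g₁.injective)
  refine ⟨(Equiv.Set.sumCompl (Set.range ⇑g₂)).symm.trans
    ((e_r.sumCongr e_c).trans (Equiv.Set.sumCompl (Set.range ⇑g₁))), fun a => ?_⟩
  have hmem : g₂ a ∈ Set.range ⇑g₂ := ⟨a, rfl⟩
  simp only [Equiv.trans_apply, Equiv.Set.sumCompl_symm_apply_of_mem hmem,
    Equiv.sumCongr_apply, Sum.map_inl, Equiv.Set.sumCompl_apply_inl]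
  show ((e_r ⟨g₂ a, hmem⟩ : ↥(Set.range ⇑g₁)) : _) = g₁ a
  simp [e_r]

lemma sum_perm_comp_eq {n k : ℕ} (F : (Fin k → Fin n) → ℝ) (g₁ g₂ : Fin k ↪ Fin n) :
    ∑ π : Equiv.Perm (Fin n), F (⇑π ∘ ⇑g₁) = ∑ π : Equiv.Perm (Fin n), F (⇑π ∘ ⇑g₂) := by
  obtain ⟨σ, hσ⟩ := exists_perm_comp g₁ g₂
  calc ∑ π : Equiv.Perm (Fin n), F (⇑π ∘ ⇑g₁)
      = ∑ π : Equiv.Perm (Fin n), F (⇑(π * σ) ∘ ⇑g₂) := by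
        refine Finset.sum_congr rfl fun π _ => ?_
        congr 1; funext a; simp [hσ a]
    _ = ∑ π : Equiv.Perm (Fin n), F (⇑π ∘ ⇑g₂) :=
        Fintype.sum_equiv (Equiv.mulRight σ) _ _ (fun π => rfl)

lemma key_count {n k : ℕ} (F : (Fin k → Fin n) → ℝ) (g₀ : Fin k ↪ Fin n) :
    (Fintype.card (Fin k ↪ Fin n) : ℝ) * ∑ π : Equiv.Perm (Fin n), F (⇑π ∘ ⇑g₀)
      = (Nat.factorial n : ℝ) * ∑ g : Fin k ↪ Fin n, F ⇑g := by
  have h1 : (Fintype.card (Fin k ↪ Fin n) : ℝ) * ∑ π : Equiv.Perm (Fin n), F (⇑π ∘ ⇑g₀)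
      = ∑ g : Fin k ↪ Fin n, ∑ π : Equiv.Perm (Fin n), F (⇑π ∘ ⇑g) := by
    rw [Finset.sum_congr rfl (fun g _ => sum_perm_comp_eq F g g₀)]
    simp [Finset.card_univ, mul_comm]
  rw [h1, Finset.sum_comm]
  have h2 : ∀ π : Equiv.Perm (Fin n), ∑ g : Fin k ↪ Fin n, F (⇑π ∘ ⇑g)
      = ∑ g : Fin k ↪ Fin n, F ⇑g := by
    intro π
    refine Fintype.sum_equiv (Equiv.embeddingCongr (Equiv.refl (Fin k)) π) _ _ (fun g => ?_)
    congr 1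
  rw [Finset.sum_congr rfl (fun π _ => h2 π), Finset.sum_const, Finset.card_univ,
    Fintype.card_perm, Fintype.card_fin, nsmul_eq_mul]

def pairEmb {n : ℕ} (x y : Fin n) (h : x ≠ y) : Fin 2 ↪ Fin n :=
  ⟨![x, y], by
    intro a b hab
    fin_cases a <;> fin_cases b <;> simp_all⟩

@[simp] lemma pairEmb_zero {n : ℕ} (x y : Fin n) (h : x ≠ y) : pairEmb x y h 0 = x := rfl
@[simp] lemma pairEmb_one {n : ℕ} (x y : Fin n) (h : x ≠ y) : pairEmb x y h 1 = y := by
  rfl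

def quadEmb {n : ℕ} (a b c e : Fin n) (h1 : a ≠ b) (h2 : a ≠ c) (h3 : a ≠ e)
    (h4 : b ≠ c) (h5 : b ≠ e) (h6 : c ≠ e) : Fin 4 ↪ Fin n :=
  ⟨![a, b, c, e], by
    intro i j hij
    fin_cases i <;> fin_cases j <;> simp_all⟩

@[simp] lemma quadEmb_zero {n : ℕ} (a b c e : Fin n) (h1 : a ≠ b) (h2 : a ≠ c) (h3 : a ≠ e)
    (h4 : b ≠ c) (h5 : b ≠ e) (h6 : c ≠ e) : quadEmb a b c e h1 h2 h3 h4 h5 h6 0 = a := rfl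
@[simp] lemma quadEmb_one {n : ℕ} (a b c e : Fin n) (h1 : a ≠ b) (h2 : a ≠ c) (h3 : a ≠ e)
    (h4 : b ≠ c) (h5 : b ≠ e) (h6 : c ≠ e) : quadEmb a b c e h1 h2 h3 h4 h5 h6 1 = b := by
  rfl
@[simp] lemma quadEmb_two {n : ℕ} (a b c e : Fin n) (h1 : a ≠ b) (h2 : a ≠ c) (h3 : a ≠ e)
    (h4 : b ≠ c) (h5 : b ≠ e) (h6 : c ≠ e) : quadEmb a b c e h1 h2 h3 h4 h5 h6 2 = c := by
  rfl
@[simp] lemma quadEmb_three {n : ℕ} (a b c e : Fin n) (h1 : a ≠ b) (h2 : a ≠ c) (h3 : a ≠ e)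
    (h4 : b ≠ c) (h5 : b ≠ e) (h6 : c ≠ e) : quadEmb a b c e h1 h2 h3 h4 h5 h6 3 = e := by
  rfl

lemma emb_pair_sum {n : ℕ} (f : Fin n → Fin n → ℝ) (hf : ∀ x, f x x = 0) :
    ∑ g : Fin 2 ↪ Fin n, f (g 0) (g 1) = ∑ x : Fin n, ∑ y : Fin n, f x y := by
  classical
  have hR : ∑ x : Fin n, ∑ y : Fin n, f x y = ∑ p ∈ Finset.univ.offDiag, f p.1 p.2 := by
    rw [← Finset.sum_product']
    rw [← Finset.sum_filter_add_sum_filter_not (Finset.univ ×ˢ Finset.univ)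
      (fun p : Fin n × Fin n => p.1 ≠ p.2)]
    have h2 : ∑ p ∈ (Finset.univ ×ˢ Finset.univ).filter
        (fun p : Fin n × Fin n => ¬ p.1 ≠ p.2), f p.1 p.2 = 0 := by
      refine Finset.sum_eq_zero fun p hp => ?_
      simp only [Finset.mem_filter, not_not] at hp
      rw [← hp.2]; exact hf _
    have h3 : (Finset.univ ×ˢ Finset.univ).filter (fun p : Fin n × Fin n => p.1 ≠ p.2)
        = Finset.univ.offDiag := by
      ext p; simp [Finset.mem_offDiag]
    rw [h2, h3, add_zero]
  rw [hR]
  refine Finset.sum_bij' (fun (g : Fin 2 ↪ Fin n) _ => ((g 0 : Fin n), (g 1 : Fin n)))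
    (fun p hp => pairEmb p.1 p.2 (Finset.mem_offDiag.1 hp).2.2) (fun g _ => ?_)
    (fun p hp => Finset.mem_univ _) (fun g hg => ?_) (fun p hp => ?_) (fun g _ => rfl)
  · exact Finset.mem_offDiag.2 ⟨Finset.mem_univ _, Finset.mem_univ _, fun h => by
      have := g.injective h; simp at this⟩
  · apply Function.Embedding.ext
    intro i; fin_cases i <;> simp [pairEmb] <;> rfl
  · simp [pairEmb]; rfl

lemma quad_sum_le {n : ℕ} (d : Fin n → Fin n → ℝ) (hnn : ∀ x y, 0 ≤ d x y) :
    ∑ g : Fin 4 ↪ Fin n, d (g 0) (g 1) * d (g 2) (g 3)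
      ≤ (∑ x : Fin n, ∑ y : Fin n, d x y) * (∑ x : Fin n, ∑ y : Fin n, d x y) := by
  classical
  have hR : (∑ x : Fin n, ∑ y : Fin n, d x y) * (∑ x : Fin n, ∑ y : Fin n, d x y)
      = ∑ p : (Fin n × Fin n) × Fin n × Fin n, d p.1.1 p.1.2 * d p.2.1 p.2.2 := by
    have h1 : ∑ x : Fin n, ∑ y : Fin n, d x y = ∑ p : Fin n × Fin n, d p.1 p.2 := by
      rw [Fintype.sum_prod_type]
    rw [h1, Finset.sum_mul_sum, Fintype.sum_prod_type]
    simp [Fintype.sum_prod_type]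
  rw [hR]
  have himg : ∑ g : Fin 4 ↪ Fin n, d (g 0) (g 1) * d (g 2) (g 3)
      = ∑ p ∈ Finset.univ.image
          (fun g : Fin 4 ↪ Fin n => (((g 0 : Fin n), (g 1 : Fin n)), ((g 2 : Fin n), (g 3 : Fin n)))),
          d p.1.1 p.1.2 * d p.2.1 p.2.2 := by
    rw [Finset.sum_image ?_]
    intro g _ g' _ h
    simp only [Prod.mk.injEq] at h
    obtain ⟨⟨h0, h1⟩, h2, h3⟩ := h
    apply Function.Embedding.ext
    intro i; fin_cases i <;> assumption
  rw [himg]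
  refine Finset.sum_le_sum_of_subset_of_nonneg (Finset.subset_univ _) ?_
  intro p _ _
  exact mul_nonneg (hnn _ _) (hnn _ _)

lemma polyStep (p u : ℝ) (hp : 4 ≤ p) (hu : 0 ≤ u) :
    p^2/4*(p^2*u)^2*(p*(p-1)*(4*p-6))
      ≤ 9*p*u^2*((p*(p-1)*(p-2)*(p-3))*(p*(p-1))^2) := by
  have h0 : 0 ≤ p - 4 := by linarith
  have hp1 : (0:ℝ) ≤ p - 1 := by linarith
  have hpoly : p^3*(4*p-6) ≤ 36*(p-1)^2*(p-2)*(p-3) := by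
    nlinarith [pow_nonneg h0 2, pow_nonneg h0 3, pow_nonneg h0 4, sq_nonneg p, mul_nonneg h0 h0]
  have hfac : 0 ≤ p^4*(p-1)*u^2/4 := by positivity
  calc p^2/4*(p^2*u)^2*(p*(p-1)*(4*p-6)) = (p^4*(p-1)*u^2/4) * (p^3*(4*p-6)) := by ring
    _ ≤ (p^4*(p-1)*u^2/4) * (36*(p-1)^2*(p-2)*(p-3)) := by
        exact mul_le_mul_of_nonneg_left hpoly hfac
    _ = 9*p*u^2*((p*(p-1)*(p-2)*(p-3))*(p*(p-1))^2) := by ring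

/-- the two endpoints of the i-th matched pair -/
def aPt (n : ℕ) (i : Fin (n / 2)) : Fin n := ⟨2 * i.val, by have := i.isLt; omega⟩
def bPt (n : ℕ) (i : Fin (n / 2)) : Fin n := ⟨2 * i.val + 1, by have := i.isLt; omega⟩


set_option maxHeartbeats 1600000 in
theorem stmt19 (n : ℕ) (hn : 4 ≤ n) (d : Fin n → Fin n → ℝ)
    (hnn : ∀ x y, 0 ≤ d x y)
    (hid : ∀ x y, d x y = 0 ↔ x = y)
    (hsymm : ∀ x y, d x y = d y x)
    (htri : ∀ x y z, d x z ≤ d x y + d y z)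
    (pstar : Fin n) (hp : ∀ y : Fin n, ∑ x : Fin n, d pstar x ≤ ∑ x : Fin n, d y x)
    (r rbar : ℝ)
    (hr : r = (1 / (n : ℝ)) * ∑ x : Fin n, d pstar x)
    (hrbar : rbar = (1 / (n : ℝ) ^ 2) * ∑ x : Fin n, ∑ y : Fin n, d x y)
    (δ : ℝ) (hδ : 0 < δ)
    (hdiam : ∀ x y : Fin n, d x y ≤ δ * (n : ℝ) * r) :
    permVar n (matchingSum n d)
      ≤ 10 * (rbar ^ 2 * (n : ℝ) + δ * (n : ℝ) ^ 2 * r * rbar + δ ^ 2 * (n : ℝ) * r ^ 2) := by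
  classical
  have hn4 : (4:ℝ) ≤ (n:ℝ) := by exact_mod_cast hn
  have hn0 : (0:ℝ) < (n:ℝ) := by linarith
  have hfac0 : ((Nat.factorial n : ℕ) : ℝ) ≠ 0 := by
    exact_mod_cast (Nat.factorial_ne_zero n)
  -- cardinalities of embedding types
  have hcard2 : ((Fintype.card (Fin 2 ↪ Fin n) : ℕ) : ℝ) = (n:ℝ) * ((n:ℝ) - 1) := by
    rw [Fintype.card_embedding_eq, Fintype.card_fin, Fintype.card_fin]
    have : n.descFactorial 2 = (n - 1) * n := by
      rw [Nat.descFactorial_succ, Nat.descFactorial_one]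
    rw [this, Nat.cast_mul, Nat.cast_sub (by omega : 1 ≤ n)]
    push_cast; ring
  have hcard4 : ((Fintype.card (Fin 4 ↪ Fin n) : ℕ) : ℝ)
      = (n:ℝ) * ((n:ℝ) - 1) * ((n:ℝ) - 2) * ((n:ℝ) - 3) := by
    rw [Fintype.card_embedding_eq, Fintype.card_fin, Fintype.card_fin]
    have : n.descFactorial 4 = (n - 3) * ((n - 2) * ((n - 1) * n)) := by
      rw [Nat.descFactorial_succ, Nat.descFactorial_succ, Nat.descFactorial_succ,
        Nat.descFactorial_one]
    rw [this, Nat.cast_mul, Nat.cast_mul, Nat.cast_mul,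
      Nat.cast_sub (by omega : 3 ≤ n), Nat.cast_sub (by omega : 2 ≤ n),
      Nat.cast_sub (by omega : 1 ≤ n)]
    push_cast; ring
  set T : ℝ := ∑ x : Fin n, ∑ y : Fin n, d x y with hT_def
  set Q : ℝ := ∑ x : Fin n, ∑ y : Fin n, d x y ^ 2 with hQ_def
  set D : ℝ := ∑ g : Fin 4 ↪ Fin n, d (g 0) (g 1) * d (g 2) (g 3) with hD_def
  set N2 : ℝ := (n:ℝ) * ((n:ℝ) - 1) with hN2_def
  set N4 : ℝ := (n:ℝ) * ((n:ℝ) - 1) * ((n:ℝ) - 2) * ((n:ℝ) - 3) with hN4_def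
  have h1' : (0:ℝ) < (n:ℝ) - 1 := by linarith
  have h2' : (0:ℝ) < (n:ℝ) - 2 := by linarith
  have h3' : (0:ℝ) < (n:ℝ) - 3 := by linarith
  have hN2pos : 0 < N2 := mul_pos hn0 h1'
  have hN4pos : 0 < N4 := mul_pos (mul_pos (mul_pos hn0 h1') h2') h3'
  -- the three per-index permutation sums
  have hpairT : ∀ e : Fin 2 ↪ Fin n,
      ∑ π : Equiv.Perm (Fin n), d (π (e 0)) (π (e 1)) = (Nat.factorial n : ℝ) * T / N2 := by
    intro e
    have h := key_count (fun g : Fin 2 → Fin n => d (g 0) (g 1)) e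
    simp only [Function.comp_apply] at h
    rw [hcard2] at h
    rw [eq_div_iff (ne_of_gt hN2pos), mul_comm _ N2, h,
      emb_pair_sum (fun x y => d x y) (fun x => (hid x x).mpr rfl)]
  have hpairQ : ∀ e : Fin 2 ↪ Fin n,
      ∑ π : Equiv.Perm (Fin n), d (π (e 0)) (π (e 1)) * d (π (e 0)) (π (e 1))
        = (Nat.factorial n : ℝ) * Q / N2 := by
    intro e
    have h := key_count (fun g : Fin 2 → Fin n => d (g 0) (g 1) * d (g 0) (g 1)) e
    simp only [Function.comp_apply] at h
    rw [hcard2] at h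
    rw [eq_div_iff (ne_of_gt hN2pos), mul_comm _ N2, h,
      emb_pair_sum (fun x y => d x y * d x y)
        (fun x => by have h0 : d x x = 0 := (hid x x).mpr rfl; simp [h0])]
    rw [hQ_def]
    refine congrArg _ (Finset.sum_congr rfl fun x _ => Finset.sum_congr rfl fun y _ => ?_)
    ring
  have hquadD : ∀ e : Fin 4 ↪ Fin n,
      ∑ π : Equiv.Perm (Fin n), d (π (e 0)) (π (e 1)) * d (π (e 2)) (π (e 3))
        = (Nat.factorial n : ℝ) * D / N4 := by
    intro e
    have h := key_count (fun g : Fin 4 → Fin n => d (g 0) (g 1) * d (g 2) (g 3)) e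
    simp only [Function.comp_apply] at h
    rw [hcard4] at h
    rw [eq_div_iff (ne_of_gt hN4pos), mul_comm _ N4, h, hD_def]
  -- endpoints are distinct
  have hab : ∀ i : Fin (n / 2), aPt n i ≠ bPt n i := fun i => by
    simp only [aPt, bPt, ne_eq, Fin.mk.injEq]; omega
  set m : ℕ := n / 2 with hm_def
  have hm1 : 1 ≤ m := by omega
  have hmR : 2 * ((m:ℕ):ℝ) ≤ (n:ℝ) := by
    have : m * 2 ≤ n := Nat.div_mul_le_self n 2
    exact_mod_cast by omega
  have hmnn : (0:ℝ) ≤ (m:ℝ) := by positivity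
  -- first moment
  have hterm1 : ∀ i : Fin m, ∑ π : Equiv.Perm (Fin n), d (π (aPt n i)) (π (bPt n i))
      = (Nat.factorial n : ℝ) * T / N2 := by
    intro i
    have h := hpairT (pairEmb (aPt n i) (bPt n i) (hab i))
    simpa using h
  have hsum1 : ∑ π : Equiv.Perm (Fin n), matchingSum n d π
      = (m:ℝ) * ((Nat.factorial n : ℝ) * T / N2) := by
    calc ∑ π : Equiv.Perm (Fin n), matchingSum n d π
        = ∑ π : Equiv.Perm (Fin n), ∑ i : Fin m, d (π (aPt n i)) (π (bPt n i)) := rfl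
      _ = ∑ i : Fin m, ∑ π : Equiv.Perm (Fin n), d (π (aPt n i)) (π (bPt n i)) :=
          Finset.sum_comm
      _ = ∑ _i : Fin m, (Nat.factorial n : ℝ) * T / N2 :=
          Finset.sum_congr rfl fun i _ => hterm1 i
      _ = (m:ℝ) * ((Nat.factorial n : ℝ) * T / N2) := by
          rw [Finset.sum_const, Finset.card_univ, Fintype.card_fin, nsmul_eq_mul]
  have hE1 : permExp n (matchingSum n d) = (m:ℝ) * T / N2 := by
    rw [permExp, hsum1]
    field_simp
  -- second moment
  have hterm2 : ∀ i j : Fin m, ∑ π : Equiv.Perm (Fin n),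
      d (π (aPt n i)) (π (bPt n i)) * d (π (aPt n j)) (π (bPt n j))
      = if i = j then (Nat.factorial n : ℝ) * Q / N2 else (Nat.factorial n : ℝ) * D / N4 := by
    intro i j
    by_cases hij : i = j
    · subst hij
      rw [if_pos rfl]
      have h := hpairQ (pairEmb (aPt n i) (bPt n i) (hab i))
      simpa using h
    · rw [if_neg hij]
      have hvij : (i:ℕ) ≠ (j:ℕ) := fun h => hij (Fin.ext h)
      have h := hquadD (quadEmb (aPt n i) (bPt n i) (aPt n j) (bPt n j)
        (hab i)
        (by simp only [aPt, ne_eq, Fin.mk.injEq]; omega)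
        (by simp only [aPt, bPt, ne_eq, Fin.mk.injEq]; omega)
        (by simp only [aPt, bPt, ne_eq, Fin.mk.injEq]; omega)
        (by simp only [bPt, ne_eq, Fin.mk.injEq]; omega)
        (hab j))
      simpa using h
  have hsum2 : ∑ π : Equiv.Perm (Fin n), (matchingSum n d π) ^ 2
      = (m:ℝ) * ((Nat.factorial n : ℝ) * Q / N2)
        + (m:ℝ) * ((m:ℝ) - 1) * ((Nat.factorial n : ℝ) * D / N4) := by
    calc ∑ π : Equiv.Perm (Fin n), (matchingSum n d π) ^ 2
        = ∑ π : Equiv.Perm (Fin n), ∑ i : Fin m, ∑ j : Fin m,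
            d (π (aPt n i)) (π (bPt n i)) * d (π (aPt n j)) (π (bPt n j)) := by
          refine Finset.sum_congr rfl fun π _ => ?_
          rw [show (matchingSum n d π) ^ 2
              = (∑ i : Fin m, d (π (aPt n i)) (π (bPt n i)))
                * (∑ j : Fin m, d (π (aPt n j)) (π (bPt n j))) from by rw [sq]; rfl,
            Finset.sum_mul_sum]
      _ = ∑ i : Fin m, ∑ j : Fin m, ∑ π : Equiv.Perm (Fin n),
            d (π (aPt n i)) (π (bPt n i)) * d (π (aPt n j)) (π (bPt n j)) := by
          rw [Finset.sum_comm]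
          exact Finset.sum_congr rfl fun i _ => Finset.sum_comm
      _ = ∑ i : Fin m, ∑ j : Fin m, (if i = j then (Nat.factorial n : ℝ) * Q / N2
            else (Nat.factorial n : ℝ) * D / N4) :=
          Finset.sum_congr rfl fun i _ => Finset.sum_congr rfl fun j _ => hterm2 i j
      _ = ∑ _i : Fin m, ((Nat.factorial n : ℝ) * Q / N2
            + ((m:ℝ) - 1) * ((Nat.factorial n : ℝ) * D / N4)) := by
          refine Finset.sum_congr rfl fun i _ => ?_
          rw [← Finset.add_sum_erase _ _ (Finset.mem_univ i), if_pos rfl]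
          congr 1
          rw [Finset.sum_congr rfl (fun j hj =>
            if_neg (fun h => (Finset.mem_erase.1 hj).1 h.symm)),
            Finset.sum_const, Finset.card_erase_of_mem (Finset.mem_univ i),
            Finset.card_univ, Fintype.card_fin, nsmul_eq_mul,
            Nat.cast_sub hm1, Nat.cast_one]
      _ = (m:ℝ) * ((Nat.factorial n : ℝ) * Q / N2)
            + (m:ℝ) * ((m:ℝ) - 1) * ((Nat.factorial n : ℝ) * D / N4) := by
          rw [Finset.sum_const, Finset.card_univ, Fintype.card_fin, nsmul_eq_mul]
          ring
  have hE2 : permExp n (fun π => (matchingSum n d π) ^ 2)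
      = (m:ℝ) * Q / N2 + (m:ℝ) * ((m:ℝ) - 1) * D / N4 := by
    rw [permExp, hsum2]
    field_simp
  have hVar : permVar n (matchingSum n d)
      = (m:ℝ) * Q / N2 + (m:ℝ) * ((m:ℝ) - 1) * D / N4 - ((m:ℝ) * T / N2) ^ 2 := by
    rw [permVar, hE2, hE1]
  rw [hVar]
  -- basic positivity facts
  have hTnn : 0 ≤ T := by
    rw [hT_def]
    exact Finset.sum_nonneg fun x _ => Finset.sum_nonneg fun y _ => hnn x y
  have hQnn : 0 ≤ Q := by
    rw [hQ_def]
    exact Finset.sum_nonneg fun x _ => Finset.sum_nonneg fun y _ => sq_nonneg _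
  have hDnn : 0 ≤ D := by
    rw [hD_def]
    exact Finset.sum_nonneg fun g _ => mul_nonneg (hnn _ _) (hnn _ _)
  have hrnn : 0 ≤ r := by
    rw [hr]
    exact mul_nonneg (by positivity) (Finset.sum_nonneg fun x _ => hnn _ _)
  have hT : T = (n:ℝ)^2 * rbar := by
    rw [hrbar]
    field_simp
  have hrbarnn : 0 ≤ rbar := by
    rw [hrbar]
    exact mul_nonneg (by positivity)
      (Finset.sum_nonneg fun x _ => Finset.sum_nonneg fun y _ => hnn _ _)
  have hQle2 : Q ≤ δ*(n:ℝ)^3*r*rbar := by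
    have h1 : Q ≤ ∑ x : Fin n, ∑ y : Fin n, δ*(n:ℝ)*r * d x y := by
      rw [hQ_def]
      refine Finset.sum_le_sum fun x _ => Finset.sum_le_sum fun y _ => ?_
      rw [sq]
      exact mul_le_mul_of_nonneg_right (hdiam x y) (hnn x y)
    have h2 : ∑ x : Fin n, ∑ y : Fin n, δ*(n:ℝ)*r * d x y = δ*(n:ℝ)*r * T := by
      rw [hT_def, Finset.mul_sum]
      exact Finset.sum_congr rfl fun x _ => by rw [Finset.mul_sum]
    rw [h2, hT] at h1
    calc Q ≤ δ*(n:ℝ)*r*((n:ℝ)^2*rbar) := h1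
      _ = δ*(n:ℝ)^3*r*rbar := by ring
  have hDle : D ≤ T^2 := by
    rw [hD_def, hT_def, sq]
    exact quad_sum_le d hnn
  have hrbar_le : rbar ≤ δ*(n:ℝ)*r := by
    have hTle : T ≤ (n:ℝ)^2*(δ*(n:ℝ)*r) := by
      rw [hT_def]
      calc ∑ x : Fin n, ∑ y : Fin n, d x y
          ≤ ∑ _x : Fin n, ∑ _y : Fin n, δ*(n:ℝ)*r :=
            Finset.sum_le_sum fun x _ => Finset.sum_le_sum fun y _ => hdiam x y
        _ = (n:ℝ)^2*(δ*(n:ℝ)*r) := by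
            simp [Finset.sum_const, Finset.card_univ, mul_comm]
            ring
    have heq : rbar * (n:ℝ)^2 = T := by rw [hrbar]; field_simp
    have h3 : rbar * (n:ℝ)^2 ≤ (δ*(n:ℝ)*r) * (n:ℝ)^2 := by
      rw [heq]
      calc T ≤ (n:ℝ)^2*(δ*(n:ℝ)*r) := hTle
        _ = (δ*(n:ℝ)*r) * (n:ℝ)^2 := by ring
    exact le_of_mul_le_mul_right h3 (by positivity)
  clear_value T Q D
  clear hterm1 hterm2 hsum1 hsum2 hE1 hE2 hpairT hpairQ hquadD hVar hT_def hQ_def hD_def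
  clear hid hsymm htri hp hdiam hr hrbar hfac0 hcard2 hcard4 hab hnn d pstar
  have hc0 : 0 ≤ δ*r*rbar := mul_nonneg (mul_nonneg hδ.le hrnn) hrbarnn
  -- Step 1 : diagonal part
  have step1 : (m:ℝ)*Q/N2 ≤ 2/3*(δ*(n:ℝ)^2*r*rbar) := by
    rw [div_le_iff₀ hN2pos, hN2_def]
    have hA1 : (m:ℝ)*Q ≤ (m:ℝ)*(δ*(n:ℝ)^3*r*rbar) := mul_le_mul_of_nonneg_left hQle2 hmnn
    have hA2 : (m:ℝ)*(δ*(n:ℝ)^3*r*rbar) ≤ ((n:ℝ)/2)*(δ*(n:ℝ)^3*r*rbar) := by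
      refine mul_le_mul_of_nonneg_right (by linarith) ?_
      have : (0:ℝ) ≤ (n:ℝ)^3 := by positivity
      nlinarith [hc0]
    have hn' : (n:ℝ)^4/2 ≤ 2/3*((n:ℝ)^3*((n:ℝ)-1)) := by
      nlinarith [mul_nonneg (pow_nonneg hn0.le 3) (by linarith : (0:ℝ) ≤ (n:ℝ)-4)]
    have hA3 : ((n:ℝ)/2)*(δ*(n:ℝ)^3*r*rbar) ≤ 2/3*(δ*(n:ℝ)^2*r*rbar)*((n:ℝ)*((n:ℝ)-1)) := by
      nlinarith [mul_le_mul_of_nonneg_left hn' hc0]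
    linarith
  -- Step 2 : off-diagonal part minus square of mean
  have step2 : (m:ℝ)*((m:ℝ)-1)*D/N4 - ((m:ℝ)*T/N2)^2 ≤ 9*((n:ℝ)*rbar^2) := by
    have e1 : (m:ℝ)*((m:ℝ)-1)*D ≤ (m:ℝ)^2*T^2 := by
      nlinarith [mul_le_mul_of_nonneg_left hDle (sq_nonneg (m:ℝ)), mul_nonneg hmnn hDnn]
    have e2 : (m:ℝ)*((m:ℝ)-1)*D/N4 ≤ (m:ℝ)^2*T^2/N4 := by gcongr
    have hid2 : (m:ℝ)^2*T^2/N4 - ((m:ℝ)*T/N2)^2 = (m:ℝ)^2*T^2*(N2^2-N4)/(N4*N2^2) := by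
      field_simp
    have hfact : N2^2 - N4 = (n:ℝ)*(((n:ℝ))-1)*(4*(n:ℝ)-6) := by
      rw [hN2_def, hN4_def]; ring
    have hposfac : 0 ≤ T^2*(N2^2-N4) := by
      refine mul_nonneg (sq_nonneg T) ?_
      rw [hfact]
      have h46 : (0:ℝ) ≤ 4*(n:ℝ)-6 := by linarith
      exact mul_nonneg (mul_nonneg hn0.le h1'.le) h46
    have hm2 : (m:ℝ)^2 ≤ (n:ℝ)^2/4 := by nlinarith [hmR, hmnn]
    have e3 : (m:ℝ)^2*T^2*(N2^2-N4) ≤ (n:ℝ)^2/4*T^2*(N2^2-N4) := by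
      nlinarith [mul_le_mul_of_nonneg_right hm2 hposfac]
    have e4 : (n:ℝ)^2/4*T^2*(N2^2-N4) ≤ 9*(n:ℝ)*rbar^2*(N4*N2^2) := by
      rw [hT, hfact, hN2_def, hN4_def]
      exact polyStep (n:ℝ) rbar hn4 hrbarnn
    have e5 : (m:ℝ)^2*T^2/N4 - ((m:ℝ)*T/N2)^2 ≤ 9*((n:ℝ)*rbar^2) := by
      rw [hid2, div_le_iff₀ (mul_pos hN4pos (pow_pos hN2pos 2))]
      nlinarith [e3, e4]
    linarith
  have step3 : 9*((n:ℝ)*rbar^2) ≤ 9*(δ*(n:ℝ)^2*r*rbar) := by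
    have hc1 : (0:ℝ) ≤ 9*(n:ℝ)*rbar := by positivity
    nlinarith [mul_le_mul_of_nonneg_left hrbar_le hc1]
  have hb1 : (0:ℝ) ≤ rbar^2*(n:ℝ) := by positivity
  have hb2 : (0:ℝ) ≤ δ^2*(n:ℝ)*r^2 := by positivity
  have hb3 : (0:ℝ) ≤ δ*(n:ℝ)^2*r*rbar := by
    have : (0:ℝ) ≤ (n:ℝ)^2 := sq_nonneg _
    nlinarith [hc0]
  linarith [step1, step2, step3]
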